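/- Let M, N, L ⊆ ℝ³ be compact sets with Borel probability measures μ, ν, σ respectively. Define D(M,N) := inf over all homeomorphisms C : M → N with pushforward of μ under C equal to ν, of dₚ(M,N;C) (and analogously D(N,L) using ν, σ, and D(M,L) using μ, σ; each infimum is +∞ if the corresponding class is empty). Then D(M,L) ≤ D(M,N) + D(N,L). -/

import Mathlib

open MeasureTheory

noncomputable section

local notation "E3" => EuclideanSpace ℝ (Fin 3)

private lemma toReal_eLpNorm_two {X : Type*} [MeasurableSpace X] {μ : Measure X}
    {f : X → E3} (hf : MemLp f 2 μ) :
    (eLpNorm f 2 μ).toReal = Real.sqrt (∫ x, ‖f x‖ ^ 2 ∂μ) := by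
  rw [hf.eLpNorm_eq_integral_rpow_norm two_ne_zero ENNReal.ofNat_ne_top]
  rw [ENNReal.toReal_ofReal (by positivity)]
  have h2 : (2 : ENNReal).toReal = (2 : ℝ) := by simp
  rw [h2]
  have hint : ∀ a, ‖f a‖ ^ (2 : ℝ) = ‖f a‖ ^ (2 : ℕ) := fun a => by
    rw [show ((2 : ℝ) = ((2 : ℕ) : ℝ)) by norm_num, Real.rpow_natCast]
  simp_rw [hint]
  rw [Real.sqrt_eq_rpow]
  norm_num

private lemma key_mink {X : Type*} [MeasurableSpace X] {μ : Measure X}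
    {u v w : X → E3} (hu : AEStronglyMeasurable u μ)
    (hv : MemLp v 2 μ) (hw : MemLp w 2 μ)
    (h : ∀ x, ‖u x‖ ≤ ‖v x‖ + ‖w x‖) :
    Real.sqrt (∫ x, ‖u x‖ ^ 2 ∂μ) ≤
      Real.sqrt (∫ x, ‖v x‖ ^ 2 ∂μ) + Real.sqrt (∫ x, ‖w x‖ ^ 2 ∂μ) := by
  have h1 : eLpNorm u 2 μ ≤ eLpNorm v 2 μ + eLpNorm w 2 μ := by
    calc eLpNorm u 2 μ ≤ eLpNorm ((fun x => ‖v x‖) + fun x => ‖w x‖) 2 μ :=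
          eLpNorm_mono_real fun x => by simpa using h x
      _ ≤ eLpNorm (fun x => ‖v x‖) 2 μ + eLpNorm (fun x => ‖w x‖) 2 μ :=
          eLpNorm_add_le hv.1.norm hw.1.norm one_le_two
      _ = eLpNorm v 2 μ + eLpNorm w 2 μ := by rw [eLpNorm_norm, eLpNorm_norm]
  have hu2 : MemLp u 2 μ :=
    ⟨hu, lt_of_le_of_lt h1 (ENNReal.add_lt_top.mpr ⟨hv.2, hw.2⟩)⟩
  rw [← toReal_eLpNorm_two hu2, ← toReal_eLpNorm_two hv, ← toReal_eLpNorm_two hw,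
    ← ENNReal.toReal_add hv.2.ne hw.2.ne]
  exact ENNReal.toReal_mono (ENNReal.add_lt_top.mpr ⟨hv.2, hw.2⟩).ne h1

/-- Triangle inequality for the continuous Procrustes distance
`D(M,N) := inf { dₚ(M,N;C) : C a measure-preserving homeomorphism M → N }`
(`+∞` if no such `C` exists): `D(M,L) ≤ D(M,N) + D(N,L)`. -/
theorem continuous_procrustes_triangle
    (M N L : Set E3) (hM : IsCompact M) (hN : IsCompact N) (hL : IsCompact L)
    (μ : Measure M) [IsProbabilityMeasure μ] (ν : Measure N) [IsProbabilityMeasure ν]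
    (σ : Measure L) [IsProbabilityMeasure σ] :
    (⨅ (C : M ≃ₜ L) (_ : Measure.map C μ = σ),
        ENNReal.ofReal (⨅ R : E3 ≃ᵃⁱ[ℝ] E3,
          Real.sqrt (∫ x, ‖R (x : E3) - (C x : E3)‖ ^ 2 ∂μ)))
      ≤ (⨅ (C : M ≃ₜ N) (_ : Measure.map C μ = ν),
          ENNReal.ofReal (⨅ R : E3 ≃ᵃⁱ[ℝ] E3,
            Real.sqrt (∫ x, ‖R (x : E3) - (C x : E3)‖ ^ 2 ∂μ)))
        + ⨅ (C : N ≃ₜ L) (_ : Measure.map C ν = σ),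
            ENNReal.ofReal (⨅ R : E3 ≃ᵃⁱ[ℝ] E3,
              Real.sqrt (∫ y, ‖R (y : E3) - (C y : E3)‖ ^ 2 ∂ν)) := by
  haveI : CompactSpace M := isCompact_iff_compactSpace.mp hM
  haveI : Nonempty (E3 ≃ᵃⁱ[ℝ] E3) := ⟨AffineIsometryEquiv.refl ℝ E3⟩
  simp_rw [ENNReal.iInf_add, ENNReal.add_iInf]
  refine le_iInf fun C1 => le_iInf fun h1 => le_iInf fun C2 => le_iInf fun h2 => ?_
  have hmap : Measure.map (⇑(C1.trans C2)) μ = σ := by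
    rw [show ⇑(C1.trans C2) = ⇑C2 ∘ ⇑C1 from rfl,
      ← Measure.map_map C2.continuous.measurable C1.continuous.measurable, h1, h2]
  refine le_trans (iInf₂_le (C1.trans C2) hmap) ?_
  rw [← ENNReal.ofReal_add (Real.iInf_nonneg fun R => Real.sqrt_nonneg _)
    (Real.iInf_nonneg fun R => Real.sqrt_nonneg _)]
  apply ENNReal.ofReal_le_ofReal
  refine le_ciInf_add_ciInf fun R1 R2 => ?_
  have hbdd : BddBelow (Set.range fun R : E3 ≃ᵃⁱ[ℝ] E3 =>
      Real.sqrt (∫ x, ‖R (x : E3) - ((C1.trans C2) x : E3)‖ ^ 2 ∂μ)) :=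
    ⟨0, by rintro y ⟨R, rfl⟩; exact Real.sqrt_nonneg _⟩
  refine le_trans (ciInf_le hbdd (R1.trans R2)) ?_
  -- rewrite the ν integral as a μ integral
  have hcont2 : Continuous fun y : N => ‖R2 (y : E3) - ((C2 y : L) : E3)‖ ^ 2 := by
    apply Continuous.pow
    exact ((R2.continuous.comp continuous_subtype_val).sub
      (continuous_subtype_val.comp C2.continuous)).norm
  have hrw : (∫ y, ‖R2 (y : E3) - ((C2 y : L) : E3)‖ ^ 2 ∂ν)
      = ∫ x, ‖R2 ((C1 x : N) : E3) - ((C2 (C1 x) : L) : E3)‖ ^ 2 ∂μ := by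
    rw [← h1, integral_map C1.continuous.measurable.aemeasurable
      hcont2.aestronglyMeasurable]
  rw [hrw]
  -- apply Minkowski
  have hv : MemLp (fun x : M => R1 (x : E3) - ((C1 x : N) : E3)) 2 μ :=
    Continuous.memLp_of_hasCompactSupport
      ((R1.continuous.comp continuous_subtype_val).sub
        (continuous_subtype_val.comp C1.continuous))
      (HasCompactSupport.of_compactSpace _)
  have hw : MemLp (fun x : M => R2 ((C1 x : N) : E3) - ((C2 (C1 x) : L) : E3)) 2 μ :=
    Continuous.memLp_of_hasCompactSupport
      ((R2.continuous.comp (continuous_subtype_val.comp C1.continuous)).sub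
        (continuous_subtype_val.comp (C2.continuous.comp C1.continuous)))
      (HasCompactSupport.of_compactSpace _)
  have hu : AEStronglyMeasurable
      (fun x : M => (R1.trans R2) (x : E3) - (((C1.trans C2) x : L) : E3)) μ :=
    (((R1.trans R2).continuous.comp continuous_subtype_val).sub
      (continuous_subtype_val.comp (C1.trans C2).continuous)).aestronglyMeasurable
  refine key_mink hu hv hw fun x => ?_
  have e1 : ((R1.trans R2) (x : E3)) = R2 (R1 (x : E3)) := rfl
  have e2 : (((C1.trans C2) x : L) : E3) = ((C2 (C1 x) : L) : E3) := rfl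
  rw [e1, e2]
  calc ‖R2 (R1 (x : E3)) - ((C2 (C1 x) : L) : E3)‖
      = dist (R2 (R1 (x : E3))) ((C2 (C1 x) : L) : E3) := (dist_eq_norm _ _).symm
    _ ≤ dist (R2 (R1 (x : E3))) (R2 ((C1 x : N) : E3))
        + dist (R2 ((C1 x : N) : E3)) ((C2 (C1 x) : L) : E3) := dist_triangle _ _ _
    _ = ‖R1 (x : E3) - ((C1 x : N) : E3)‖
        + ‖R2 ((C1 x : N) : E3) - ((C2 (C1 x) : L) : E3)‖ := by
        rw [R2.dist_map, dist_eq_norm, dist_eq_norm]
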